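/- With cos α = t₂/2, sin α = √(4−t₂²)/2 (t₂ ∈ (−2,2)), and a₁ ∈ ℂ determined by 2Re(−i e^{−iα} a₁) = t₁ and 2Re(−i a₁) = t₁₂, one has 1 − |a₁|² = (t₁² + t₂² + t₁₂² − t₁t₂t₁₂ − 4)/(t₂² − 4). -/

import Mathlib

theorem stmt_7 (t₁ t₂ t₁₂ : ℝ) (h₂ : t₂ ∈ Set.Ioo (-2 : ℝ) 2) (a₁ : ℂ)
    (ha₁ : -Complex.I * a₁
      = (1/2) * ((t₁₂ : ℂ) - Complex.I *
          (((t₁₂ * (t₂/2) - t₁) / (Real.sqrt (4 - t₂^2) / 2) : ℝ) : ℂ))) :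
    1 - ‖a₁‖ ^ 2
      = (t₁^2 + t₂^2 + t₁₂^2 - t₁*t₂*t₁₂ - 4) / (t₂^2 - 4) := by
  obtain ⟨h2a, h2b⟩ := h₂
  have hpos : (0:ℝ) < 4 - t₂^2 := by nlinarith
  have hs : Real.sqrt (4 - t₂^2) ^ 2 = 4 - t₂^2 := Real.sq_sqrt hpos.le
  have hsne : Real.sqrt (4 - t₂^2) ≠ 0 := by positivity
  have hne : t₂^2 - 4 ≠ 0 := by nlinarith
  rw [Complex.ext_iff] at ha₁
  simp [Complex.ext_iff, -Complex.ofReal_div, -Complex.ofReal_mul, -Complex.ofReal_sub] at ha₁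
  obtain ⟨him, hre⟩ := ha₁
  rw [Complex.sq_norm, Complex.normSq_apply]
  rw [hre, him]
  field_simp
  nlinarith [hs, sq_nonneg (Real.sqrt (4 - t₂^2))]
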